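/- Let n ≥ 8 be a real number and define, for x > 0, f_n(x) = n(n-1)/(2x) and g_n(x) = (x+1)(n - x - 1/2). Suppose x₀ and x₁ are positive reals with x₀ < x₁ such that f_n(x₀) = g_n(x₀) and f_n(x₁) = g_n(x₁). Then min{f_n(x), g_n(x)} ≤ f_n(x₀) for every real x > 0 (so f_n(x₀) = g_n(x₀) is the maximum of min{f_n, g_n} over the positive reals), and moreover x₀ = √(n/2 + 1/16) − 1/4. -/

import Mathlib

theorem min_max_lemma
    (n : ℝ) (hn : 8 ≤ n)
    (f g : ℝ → ℝ)
    (hf : ∀ x : ℝ, f x = n * (n - 1) / (2 * x))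
    (hg : ∀ x : ℝ, g x = (x + 1) * (n - x - 1 / 2))
    (x₀ x₁ : ℝ) (hx₀ : 0 < x₀) (hx₁ : 0 < x₁) (hlt : x₀ < x₁)
    (h₀ : f x₀ = g x₀) (h₁ : f x₁ = g x₁) :
    (∀ x : ℝ, 0 < x → min (f x) (g x) ≤ f x₀) ∧
      x₀ = Real.sqrt (n / 2 + 1 / 16) - 1 / 4 := by
  have key : ∀ y : ℝ, 0 < y → f y = g y → (2*y^2 + y - n) * (y + 1 - n) = 0 := by
    intro y hy hfg
    rw [hf y, hg y] at hfg
    have hy' : (2*y) ≠ 0 := by positivity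
    field_simp at hfg
    linear_combination hfg
  have hx0eq : 2*x₀^2 + x₀ = n := by
    rcases mul_eq_zero.1 (key x₀ hx₀ h₀) with h | h
    · linarith
    · exfalso
      have hx0n : x₀ = n - 1 := by linarith
      rcases mul_eq_zero.1 (key x₁ hx₁ h₁) with h' | h'
      · nlinarith
      · nlinarith
  constructor
  · intro x hx
    rcases le_or_gt x x₀ with hle | hle
    · -- use g, increasing up to x₀
      have hg' : g x ≤ g x₀ := by
        rw [hg x, hg x₀]
        nlinarith [mul_nonneg (sub_nonneg.2 hle) (sub_nonneg.2 hle), sq_nonneg (x₀ - 2)]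
      calc min (f x) (g x) ≤ g x := min_le_right _ _
        _ ≤ g x₀ := hg'
        _ = f x₀ := h₀.symm
    · have hf' : f x ≤ f x₀ := by
        rw [hf x, hf x₀]
        apply div_le_div_of_nonneg_left _ (by positivity) (by linarith)
        nlinarith
      exact le_trans (min_le_left _ _) hf'
  · set t := Real.sqrt (n / 2 + 1 / 16) with ht
    have ht2 : t^2 = n/2 + 1/16 := Real.sq_sqrt (by linarith)
    have ht0 : 0 ≤ t := Real.sqrt_nonneg _
    have hfac : (x₀ - (t - 1/4)) * (2*x₀ + 2*t + 1/2) = 0 := by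
      linear_combination hx0eq - 2*ht2
    rcases mul_eq_zero.1 hfac with h | h
    · linarith
    · nlinarith
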